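/- Let P be an n×n real symmetric matrix with P² = P and let Λ be an m×n real matrix with Λ Λᵀ = I_m. Then for every y ∈ ℝᵐ, min{‖P f‖ : f ∈ ℝⁿ, Λ f = y} = min{‖Λ f − y‖ : f ∈ ℝⁿ, P f = 0}, where both minima are over nonempty sets (the first because Λ is surjective). -/

import Mathlib

open Matrix RealInnerProductSpace

/-- Euclidean norm on `Fin k → ℝ`. -/
noncomputable def eNorm {k : ℕ} (x : Fin k → ℝ) : ℝ := Real.sqrt (∑ i, x i ^ 2)

lemma eNorm_sq {k : ℕ} (x : Fin k → ℝ) : eNorm x = Real.sqrt (x ⬝ᵥ x) := by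
  simp [eNorm, dotProduct, sq]

lemma eNorm_neg {k : ℕ} (x : Fin k → ℝ) : eNorm (-x) = eNorm x := by
  simp [eNorm, Pi.neg_apply, neg_sq]

lemma eNorm_le_add {k : ℕ} (a b : Fin k → ℝ) (h : a ⬝ᵥ b = 0) :
    eNorm a ≤ eNorm (a + b) := by
  rw [eNorm_sq, eNorm_sq]
  apply Real.sqrt_le_sqrt
  have hba : b ⬝ᵥ a = 0 := by rw [dotProduct_comm]; exact h
  have hbb : (0 : ℝ) ≤ b ⬝ᵥ b := Finset.sum_nonneg fun i _ => mul_self_nonneg _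
  have expand : (a + b) ⬝ᵥ (a + b) = a ⬝ᵥ a + a ⬝ᵥ b + b ⬝ᵥ a + b ⬝ᵥ b := by
    simp [add_dotProduct, dotProduct_add]; ring
  rw [expand, h, hba]
  linarith

lemma mulVec_symm_dot {n : ℕ} (M : Matrix (Fin n) (Fin n) ℝ) (hs : Mᵀ = M)
    (a b : Fin n → ℝ) : (M *ᵥ a) ⬝ᵥ b = a ⬝ᵥ (M *ᵥ b) := by
  rw [Matrix.dotProduct_mulVec, ← Matrix.mulVec_transpose, hs]

lemma proj_fix {n : ℕ} (M : Matrix (Fin n) (Fin n) ℝ) (hs : Mᵀ = M) (hp : M * M = M)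
    (x : Fin n → ℝ) (h : ∀ z, M *ᵥ z = 0 → x ⬝ᵥ z = 0) : M *ᵥ x = x := by
  have hd : M *ᵥ (x - M *ᵥ x) = 0 := by
    rw [Matrix.mulVec_sub, Matrix.mulVec_mulVec, hp, sub_self]
  have h1 : x ⬝ᵥ (x - M *ᵥ x) = 0 := h _ hd
  have h2 : (M *ᵥ x) ⬝ᵥ (x - M *ᵥ x) = 0 := by
    rw [mulVec_symm_dot M hs]
    apply h
    rw [hd, Matrix.mulVec_zero]
  have h3 : (x - M *ᵥ x) ⬝ᵥ (x - M *ᵥ x) = 0 := by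
    rw [sub_dotProduct, h1, h2, sub_zero]
  have h4 : x - M *ᵥ x = 0 := dotProduct_self_eq_zero.mp h3
  have := sub_eq_zero.mp h4
  exact this.symm

noncomputable def kerE {n m : ℕ} (M : Matrix (Fin m) (Fin n) ℝ) :
    Submodule ℝ (EuclideanSpace ℝ (Fin n)) where
  carrier := {x | M *ᵥ x = 0}
  add_mem' := by
    intro a b ha hb
    show M *ᵥ (a + b) = 0
    have h : M *ᵥ (a + b) = M *ᵥ a + M *ᵥ b := Matrix.mulVec_add M a b
    simp only [Set.mem_setOf_eq] at ha hb
    rw [h, ha, hb, add_zero]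
  zero_mem' := by show M *ᵥ (0 : Fin n → ℝ) = 0; simp
  smul_mem' := by
    intro c x hx
    show M *ᵥ (c • x) = 0
    have h : M *ᵥ (c • x) = c • (M *ᵥ x) := Matrix.mulVec_smul M c x
    simp only [Set.mem_setOf_eq] at hx
    rw [h, hx, smul_zero]

theorem exists_decomp {n m : ℕ} (P : Matrix (Fin n) (Fin n) ℝ) (Λ : Matrix (Fin m) (Fin n) ℝ)
    (f₀ : Fin n → ℝ) :
    ∃ u v : Fin n → ℝ, Λ *ᵥ u = 0 ∧ P *ᵥ v = 0 ∧
      (∀ z, Λ *ᵥ z = 0 → (f₀ - (u + v)) ⬝ᵥ z = 0) ∧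
      (∀ z, P *ᵥ z = 0 → (f₀ - (u + v)) ⬝ᵥ z = 0) := by
  set W : Submodule ℝ (EuclideanSpace ℝ (Fin n)) := kerE Λ ⊔ kerE P with hW
  set f₀E : EuclideanSpace ℝ (Fin n) := WithLp.toLp 2 f₀ with hf₀E
  have hwW : (↑(W.orthogonalProjectionOnto f₀E) : EuclideanSpace ℝ (Fin n)) ∈ W :=
    (W.orthogonalProjectionOnto f₀E).2
  obtain ⟨u, hu, v, hv, huv⟩ := Submodule.mem_sup.mp hwW
  have horth : f₀E - ↑(W.orthogonalProjectionOnto f₀E) ∈ Wᗮ :=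
    Submodule.sub_starProjection_mem_orthogonal (K := W) f₀E
  rw [← huv] at horth
  have key : ∀ z : EuclideanSpace ℝ (Fin n), z ∈ W →
      dotProduct (f₀E - (u + v)) z = 0 := by
    intro z hz
    have h := (Submodule.mem_orthogonal W (f₀E - (u + v))).mp horth z hz
    have h2 : ⟪z, f₀E - (u + v)⟫ = dotProduct (f₀E - (u + v)) z := by
      simp only [PiLp.inner_apply, RCLike.inner_apply, conj_trivial]
      exact Finset.sum_congr rfl fun i _ => rfl
    rw [← h2, h]
  refine ⟨u, v, hu, hv, ?_, ?_⟩ <;> intro z hz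
  · exact key (WithLp.toLp 2 z) (Submodule.mem_sup_left hz)
  · exact key (WithLp.toLp 2 z) (Submodule.mem_sup_right hz)

theorem min_characterizations_agree {n m : ℕ}
    (P : Matrix (Fin n) (Fin n) ℝ) (Λ : Matrix (Fin m) (Fin n) ℝ)
    (hPsymm : P.IsSymm) (hPproj : P * P = P) (hΛ : Λ * Λᵀ = 1) :
    ∀ y : Fin m → ℝ,
      {r : ℝ | ∃ f : Fin n → ℝ, Λ *ᵥ f = y ∧ r = eNorm (P *ᵥ f)}.Nonempty ∧
      {r : ℝ | ∃ f : Fin n → ℝ, P *ᵥ f = 0 ∧ r = eNorm (Λ *ᵥ f - y)}.Nonempty ∧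
      ∃ δ : ℝ,
        IsLeast {r : ℝ | ∃ f : Fin n → ℝ, Λ *ᵥ f = y ∧ r = eNorm (P *ᵥ f)} δ ∧
        IsLeast {r : ℝ | ∃ f : Fin n → ℝ, P *ᵥ f = 0 ∧ r = eNorm (Λ *ᵥ f - y)} δ := by
  intro y
  -- basic setup
  set Q : Matrix (Fin n) (Fin n) ℝ := Λᵀ * Λ with hQ
  have hQs : Qᵀ = Q := by rw [hQ, Matrix.transpose_mul, Matrix.transpose_transpose]
  have hQp : Q * Q = Q := by
    rw [hQ, Matrix.mul_assoc, ← Matrix.mul_assoc Λ Λᵀ Λ, hΛ, Matrix.one_mul]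
  have hLQ : Λ * Q = Λ := by rw [hQ, ← Matrix.mul_assoc, hΛ, Matrix.one_mul]
  set f₀ : Fin n → ℝ := Λᵀ *ᵥ y with hf₀def
  have hf₀ : Λ *ᵥ f₀ = y := by
    rw [hf₀def, Matrix.mulVec_mulVec, hΛ, Matrix.one_mulVec]
  obtain ⟨u, v, hu, hv, horthΛ, horthP⟩ := exists_decomp P Λ f₀
  set d : Fin n → ℝ := f₀ - (u + v) with hd
  -- d is fixed by P
  have hPd : P *ᵥ d = d := proj_fix P hPsymm hPproj d horthP
  -- kernel of Q is contained in kernel of Λ, orthogonality transfers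
  have hQker : ∀ z, Q *ᵥ z = 0 → d ⬝ᵥ z = 0 := by
    intro z hz
    apply horthΛ
    have h1 : Λ *ᵥ z = Λ *ᵥ (Q *ᵥ z) := by rw [Matrix.mulVec_mulVec, hLQ]
    rw [h1, hz, Matrix.mulVec_zero]
  have hQd : Q *ᵥ d = d := proj_fix Q hQs hQp d hQker
  have hQu : Q *ᵥ u = 0 := by
    rw [hQ, ← Matrix.mulVec_mulVec, hu, Matrix.mulVec_zero]
  have hQf₀ : Q *ᵥ f₀ = f₀ := by
    rw [hf₀def, Matrix.mulVec_mulVec, hQ, Matrix.mul_assoc, hΛ, Matrix.mul_one]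
  have hQv : Q *ᵥ v = u + v := by
    have h1 : v = f₀ - d - u := by rw [hd]; abel
    have h2 : Q *ᵥ v = Q *ᵥ f₀ - Q *ᵥ d - Q *ᵥ u := by
      rw [h1, Matrix.mulVec_sub, Matrix.mulVec_sub]
    rw [h2, hQf₀, hQd, hQu, sub_zero, hd]
    abel
  -- isometry of Λᵀ
  have hiso : ∀ z : Fin m → ℝ, eNorm (Λᵀ *ᵥ z) = eNorm z := by
    intro z
    rw [eNorm_sq, eNorm_sq]
    congr 1
    calc (Λᵀ *ᵥ z) ⬝ᵥ (Λᵀ *ᵥ z) = (z ᵥ* Λ) ⬝ᵥ (Λᵀ *ᵥ z) := by rw [Matrix.mulVec_transpose]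
      _ = z ⬝ᵥ (Λ *ᵥ (Λᵀ *ᵥ z)) := (Matrix.dotProduct_mulVec z Λ _).symm
      _ = z ⬝ᵥ z := by rw [Matrix.mulVec_mulVec, hΛ, Matrix.one_mulVec]
  have hΛt : ∀ f : Fin n → ℝ, eNorm (Λ *ᵥ f - y) = eNorm (Q *ᵥ f - f₀) := by
    intro f
    rw [← hiso (Λ *ᵥ f - y), Matrix.mulVec_sub, Matrix.mulVec_mulVec, ← hQ, ← hf₀def]
  -- membership 1 : f₁ = f₀ - u
  have mem1 : eNorm d ∈ {r : ℝ | ∃ f : Fin n → ℝ, Λ *ᵥ f = y ∧ r = eNorm (P *ᵥ f)} := by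
    refine ⟨f₀ - u, ?_, ?_⟩
    · rw [Matrix.mulVec_sub, hu, hf₀, sub_zero]
    · have h1 : f₀ - u = d + v := by rw [hd]; abel
      rw [h1, Matrix.mulVec_add, hPd, hv, add_zero]
  -- membership 2 : f₂ = v
  have mem2 : eNorm d ∈ {r : ℝ | ∃ f : Fin n → ℝ, P *ᵥ f = 0 ∧ r = eNorm (Λ *ᵥ f - y)} := by
    refine ⟨v, hv, ?_⟩
    rw [hΛt v, hQv]
    have h1 : u + v - f₀ = -d := by rw [hd]; abel
    rw [h1, eNorm_neg]
  -- lower bound 1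
  have lb1 : ∀ r ∈ {r : ℝ | ∃ f : Fin n → ℝ, Λ *ᵥ f = y ∧ r = eNorm (P *ᵥ f)},
      eNorm d ≤ r := by
    rintro r ⟨f, hf, rfl⟩
    have z1 : d ⬝ᵥ (P *ᵥ f - f) = 0 := by
      apply horthP
      rw [Matrix.mulVec_sub, Matrix.mulVec_mulVec, hPproj, sub_self]
    have z2 : d ⬝ᵥ (f - f₀) = 0 := by
      apply horthΛ
      rw [Matrix.mulVec_sub, hf, hf₀, sub_self]
    have z3 : d ⬝ᵥ u = 0 := horthΛ u hu
    have z4 : d ⬝ᵥ v = 0 := horthP v hv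
    have hb : d ⬝ᵥ (P *ᵥ f - d) = 0 := by
      have e1 : P *ᵥ f - d = (P *ᵥ f - f) + ((f - f₀) + (u + v)) := by rw [hd]; abel
      rw [e1, dotProduct_add, dotProduct_add, dotProduct_add,
        z1, z2, z3, z4]
      ring
    have e2 : P *ᵥ f = d + (P *ᵥ f - d) := by abel
    calc eNorm d ≤ eNorm (d + (P *ᵥ f - d)) := eNorm_le_add d _ hb
      _ = eNorm (P *ᵥ f) := by rw [← e2]
  -- lower bound 2
  have lb2 : ∀ r ∈ {r : ℝ | ∃ f : Fin n → ℝ, P *ᵥ f = 0 ∧ r = eNorm (Λ *ᵥ f - y)},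
      eNorm d ≤ r := by
    rintro r ⟨f, hf, rfl⟩
    have z1 : d ⬝ᵥ (Q *ᵥ f - f) = 0 := by
      apply horthΛ
      have h1 : Λ *ᵥ (Q *ᵥ f) = Λ *ᵥ f := by rw [Matrix.mulVec_mulVec, hLQ]
      rw [Matrix.mulVec_sub, h1, sub_self]
    have z2 : d ⬝ᵥ f = 0 := horthP f hf
    have z3 : d ⬝ᵥ u = 0 := horthΛ u hu
    have z4 : d ⬝ᵥ v = 0 := horthP v hv
    have hb : (-d) ⬝ᵥ (Q *ᵥ f - f₀ - (-d)) = 0 := by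
      have e1 : Q *ᵥ f - f₀ - (-d) = (Q *ᵥ f - f) + (f - (u + v)) := by rw [hd]; abel
      have z5 : d ⬝ᵥ (f - (u + v)) = 0 := by
        rw [dotProduct_sub, dotProduct_add, z2, z3, z4]; ring
      rw [e1, neg_dotProduct, dotProduct_add, z1, z5]; ring
    have e2 : Q *ᵥ f - f₀ = (-d) + (Q *ᵥ f - f₀ - (-d)) := by abel
    calc eNorm d = eNorm (-d) := (eNorm_neg d).symm
      _ ≤ eNorm ((-d) + (Q *ᵥ f - f₀ - (-d))) := eNorm_le_add _ _ hb
      _ = eNorm (Q *ᵥ f - f₀) := by rw [← e2]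
      _ = eNorm (Λ *ᵥ f - y) := (hΛt f).symm
  exact ⟨⟨eNorm d, mem1⟩, ⟨eNorm d, mem2⟩, eNorm d, ⟨mem1, lb1⟩, ⟨mem2, lb2⟩⟩
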